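/- Assume I is a real interval centered at 0 with [−1,1] ⊆ I, and let f : Iⁿ → ℝ be a function with f(0) = 0 such that f restricted to I₊ⁿ or to I₋ⁿ is nonconstant. The following are equivalent: (i) f is a symmetric signed quasi-Choquet integral and there exists S ⊆ X with f(1_S) ≠ 0; (ii) f is comonotonically modular and there exists a nondecreasing odd function φ : I → ℝ such that f(x·1_S) = φ(x)·f(1_S) for every x ∈ I and every S ⊆ X. -/

import Mathlib

/-- `S↑_σ(i)` (0-indexed): the set `{σ(i), σ(i+1), …, σ(n-1)}`.  For `i = n` it is empty. -/
def SUp {n : ℕ} (σ : Equiv.Perm (Fin n)) (i : ℕ) : Finset (Fin n) :=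
  (Finset.univ.filter (fun j : Fin n => i ≤ (j : ℕ))).image σ

/-- `S↓_σ(i)`: the set `{σ(0), …, σ(i-1)}`.  For `i = 0` it is empty. -/
def SDown {n : ℕ} (σ : Equiv.Perm (Fin n)) (i : ℕ) : Finset (Fin n) :=
  (Finset.univ.filter (fun j : Fin n => (j : ℕ) < i)).image σ

/-- Two tuples are comonotonic if some permutation sorts both nondecreasingly. -/
def Comonotone {n : ℕ} (x y : Fin n → ℝ) : Prop :=
  ∃ σ : Equiv.Perm (Fin n), Monotone (x ∘ σ) ∧ Monotone (y ∘ σ)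

/-- The tuple `r·1_S`. -/
def indTuple {n : ℕ} (S : Finset (Fin n)) (r : ℝ) : Fin n → ℝ :=
  fun j => if j ∈ S then r else 0

/-- The signed Choquet integral of `x` w.r.t. `v`, computed via a sorting permutation. -/
noncomputable def Cv {n : ℕ} (v : Finset (Fin n) → ℝ) (x : Fin n → ℝ) : ℝ :=
  ∑ i : Fin n,
    x (Tuple.sort x i) *
      (v (SUp (Tuple.sort x) (i : ℕ)) - v (SUp (Tuple.sort x) ((i : ℕ) + 1)))

/-- `f` is the restriction to `Iⁿ` of a signed Choquet integral. -/
def IsSignedChoquetOn {n : ℕ} (I : Set ℝ) (f : (Fin n → ℝ) → ℝ) : Prop :=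
  ∃ v : Finset (Fin n) → ℝ, v ∅ = 0 ∧
    ∀ σ : Equiv.Perm (Fin n), ∀ x : Fin n → ℝ, (∀ i, x i ∈ I) → Monotone (x ∘ σ) →
      f x = ∑ i : Fin n, x (σ i) * (v (SUp σ (i : ℕ)) - v (SUp σ ((i : ℕ) + 1)))

/-- `f` is the restriction to `Iⁿ` of a symmetric signed Choquet integral
`Č_v(x) = C_v(x⁺) - C_v(x⁻)`. -/
def IsSymSignedChoquetOn {n : ℕ} (I : Set ℝ) (f : (Fin n → ℝ) → ℝ) : Prop :=
  ∃ v : Finset (Fin n) → ℝ, v ∅ = 0 ∧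
    ∀ x : Fin n → ℝ, (∀ i, x i ∈ I) →
      f x = Cv v (fun i => max (x i) 0) - Cv v (fun i => max (-x i) 0)

/-- Comonotonic modularity (on tuples with entries in `D`). -/
def ComonModularOn {n : ℕ} (D : Set ℝ) (f : (Fin n → ℝ) → ℝ) : Prop :=
  ∀ x y : Fin n → ℝ, (∀ i, x i ∈ D) → (∀ i, y i ∈ D) → Comonotone x y →
    f x + f y = f (fun i => min (x i) (y i)) + f (fun i => max (x i) (y i))

/-- Comonotonic additivity (on tuples with entries in `D`). -/
def ComonAdditiveOn {n : ℕ} (D : Set ℝ) (f : (Fin n → ℝ) → ℝ) : Prop :=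
  ∀ x y : Fin n → ℝ, (∀ i, x i ∈ D) → (∀ i, y i ∈ D) → Comonotone x y →
    (∀ i, x i + y i ∈ D) → f (fun i => x i + y i) = f x + f y

/-- Comonotonic maxitivity. -/
def ComonMaxitiveOn {n : ℕ} (D : Set ℝ) (f : (Fin n → ℝ) → ℝ) : Prop :=
  ∀ x y : Fin n → ℝ, (∀ i, x i ∈ D) → (∀ i, y i ∈ D) → Comonotone x y →
    f (fun i => max (x i) (y i)) = max (f x) (f y)

/-- Comonotonic minitivity. -/
def ComonMinitiveOn {n : ℕ} (D : Set ℝ) (f : (Fin n → ℝ) → ℝ) : Prop :=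
  ∀ x y : Fin n → ℝ, (∀ i, x i ∈ D) → (∀ i, y i ∈ D) → Comonotone x y →
    f (fun i => min (x i) (y i)) = min (f x) (f y)

/-- Horizontal min-additivity. -/
def HorizMinAdditiveOn {n : ℕ} (D : Set ℝ) (f : (Fin n → ℝ) → ℝ) : Prop :=
  ∀ x : Fin n → ℝ, (∀ i, x i ∈ D) → ∀ c ∈ D, (∀ i, x i - min (x i) c ∈ D) →
    f x = f (fun i => min (x i) c) + f (fun i => x i - min (x i) c)

/-- Horizontal max-additivity. -/
def HorizMaxAdditiveOn {n : ℕ} (D : Set ℝ) (f : (Fin n → ℝ) → ℝ) : Prop :=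
  ∀ x : Fin n → ℝ, (∀ i, x i ∈ D) → ∀ c ∈ D, (∀ i, x i - max (x i) c ∈ D) →
    f x = f (fun i => max (x i) c) + f (fun i => x i - max (x i) c)

/-- Horizontal median-additivity (for `I` centered at `0`). -/
def HorizMedAdditiveOn {n : ℕ} (I : Set ℝ) (f : (Fin n → ℝ) → ℝ) : Prop :=
  ∀ x : Fin n → ℝ, (∀ i, x i ∈ I) → ∀ c ∈ I, 0 ≤ c →
    f x = f (fun i => max (-c) (min (x i) c)) + f (fun i => x i - min (x i) c)
        + f (fun i => x i - max (x i) (-c))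

/-- Invariance under horizontal min-differences (for domains of nonnegative tuples). -/
def InvHMinDiffOn {n : ℕ} (D : Set ℝ) (f : (Fin n → ℝ) → ℝ) : Prop :=
  ∀ x : Fin n → ℝ, (∀ i, x i ∈ D) → ∀ c ∈ D,
    f x - f (fun i => min (x i) c) =
      f (fun i => if x i ≤ c then 0 else x i) -
        f (fun i => min (if x i ≤ c then 0 else x i) c)

/-- Invariance under horizontal max-differences (for domains of nonpositive tuples). -/
def InvHMaxDiffOn {n : ℕ} (D : Set ℝ) (f : (Fin n → ℝ) → ℝ) : Prop :=
  ∀ x : Fin n → ℝ, (∀ i, x i ∈ D) → ∀ c ∈ D,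
    f x - f (fun i => max (x i) c) =
      f (fun i => if c ≤ x i then 0 else x i) -
        f (fun i => max (if c ≤ x i then 0 else x i) c)

/-- `⋀_{i ∈ S} x i`, with the convention that the empty infimum is `b`. -/
noncomputable def infWith {n : ℕ} (b : ℝ) (S : Finset (Fin n)) (x : Fin n → ℝ) : ℝ :=
  if h : S.Nonempty then S.inf' h x else b

/-- An `[a,b]`-valued capacity. -/
def IsCapacityOn {n : ℕ} (a b : ℝ) (μ : Finset (Fin n) → ℝ) : Prop :=
  μ ∅ = a ∧ μ Finset.univ = b ∧ ∀ S T : Finset (Fin n), S ⊆ T → μ S ≤ μ T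

/-- `f` is nondecreasing (in each argument) on tuples with entries in `D`. -/
def NondecreasingOn {n : ℕ} (D : Set ℝ) (f : (Fin n → ℝ) → ℝ) : Prop :=
  ∀ x y : Fin n → ℝ, (∀ i, x i ∈ D) → (∀ i, y i ∈ D) → (∀ i, x i ≤ y i) → f x ≤ f y


section Aux
open Finset

variable {n : ℕ}

lemma mem_SUp (σ : Equiv.Perm (Fin n)) (k : ℕ) (j : Fin n) :
    j ∈ SUp σ k ↔ k ≤ ((σ.symm j : Fin n) : ℕ) := by
  simp only [SUp, Finset.mem_image, Finset.mem_filter, Finset.mem_univ, true_and]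
  constructor
  · rintro ⟨i, hi, rfl⟩; simpa using hi
  · intro h; exact ⟨σ.symm j, h, σ.apply_symm_apply j⟩

lemma SUp_zero (σ : Equiv.Perm (Fin n)) : SUp σ 0 = Finset.univ := by
  ext j; simp [mem_SUp]

lemma SUp_of_le (σ : Equiv.Perm (Fin n)) {k : ℕ} (h : n ≤ k) : SUp σ k = ∅ := by
  ext j; simp only [mem_SUp, Finset.notMem_empty, iff_false]
  have := (σ.symm j).isLt; omega

lemma SUp_antitone (σ : Equiv.Perm (Fin n)) {k l : ℕ} (h : k ≤ l) : SUp σ l ⊆ SUp σ k := by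
  intro j hj; rw [mem_SUp] at *; omega

/-- Abel summation. -/
lemma abel_sum (y g : ℕ → ℝ) : ∀ m : ℕ, 0 < m →
    ∑ i ∈ Finset.range m, y i * (g i - g (i+1)) =
      y 0 * g 0 - y (m-1) * g m + ∑ i ∈ Finset.Ico 1 m, (y i - y (i-1)) * g i := by
  intro m
  induction m with
  | zero => omega
  | succ m ih =>
    intro _
    rcases Nat.eq_zero_or_pos m with rfl | hm
    · simp; ring
    · rw [Finset.sum_range_succ, ih hm, Finset.sum_Ico_succ_top (by omega)]
      have h1 : m + 1 - 1 = m := rfl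
      rw [h1]; ring

lemma telescope_sum (g : ℕ → ℝ) {m k : ℕ} (h : m ≤ k) :
    ∑ i ∈ Finset.Ico m k, (g i - g (i+1)) = g m - g k := by
  rw [Finset.sum_Ico_eq_sum_range]
  have hs := Finset.sum_range_sub (fun t => g (m + t)) (k - m)
  have hk : m + (k - m) = k := by omega
  calc ∑ i ∈ Finset.range (k - m), (g (m + i) - g (m + i + 1))
      = -∑ i ∈ Finset.range (k - m), ((fun t => g (m + t)) (i + 1) - (fun t => g (m + t)) i) := by
        rw [← Finset.sum_neg_distrib]
        exact Finset.sum_congr rfl fun i _ => by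
          show g (m + i) - g (m + i + 1) = -(g (m + (i + 1)) - g (m + i))
          rw [show m + (i + 1) = m + i + 1 from rfl]; ring
    _ = -(g (m + (k - m)) - g (m + 0)) := by rw [hs]
    _ = g m - g k := by rw [hk]; simp

end Aux


section Canon
open Finset

variable {n : ℕ}

/-- Padded version of `x ∘ σ` as a function on `ℕ`. -/
noncomputable def padded (x : Fin n → ℝ) (σ : Equiv.Perm (Fin n)) : ℕ → ℝ :=
  fun i => if h : i < n then x (σ ⟨i, h⟩) else 0

lemma padded_lt (x : Fin n → ℝ) (σ : Equiv.Perm (Fin n)) {i : ℕ} (h : i < n) :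
    padded x σ i = x (σ ⟨i, h⟩) := dif_pos h

/-- The canonical (permutation-free) value of the Choquet sum. -/
noncomputable def canonSum (v : Finset (Fin n) → ℝ) (x : Fin n → ℝ) (y : ℕ → ℝ) : ℝ :=
  y 0 * v Finset.univ +
    ∑ i ∈ Finset.Ico 1 n, (y i - y (i-1)) * v (Finset.univ.filter fun j => y i ≤ x j)

lemma sum_canon (hn : 0 < n) (v : Finset (Fin n) → ℝ) (hv : v ∅ = 0) (x : Fin n → ℝ)
    (σ : Equiv.Perm (Fin n)) (hσ : Monotone (x ∘ σ)) :
    ∑ i : Fin n, x (σ i) * (v (SUp σ (i : ℕ)) - v (SUp σ ((i : ℕ) + 1)))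
      = canonSum v x (padded x σ) := by
  have hfin : ∑ i : Fin n, x (σ i) * (v (SUp σ (i : ℕ)) - v (SUp σ ((i : ℕ) + 1)))
      = ∑ i ∈ Finset.range n,
          padded x σ i * ((fun t => v (SUp σ t)) i - (fun t => v (SUp σ t)) (i + 1)) := by
    rw [← Fin.sum_univ_eq_sum_range
      (fun i => padded x σ i * ((fun t => v (SUp σ t)) i - (fun t => v (SUp σ t)) (i + 1))) n]
    exact Finset.sum_congr rfl fun i _ => by
      simp only [padded_lt x σ i.isLt, Fin.eta]
  rw [hfin, abel_sum (padded x σ) (fun t => v (SUp σ t)) n hn]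
  show padded x σ 0 * v (SUp σ 0) - padded x σ (n - 1) * v (SUp σ n) + _ = _
  rw [SUp_of_le σ le_rfl, hv, SUp_zero, mul_zero, sub_zero]
  have hmain : ∀ i ∈ Finset.Ico 1 n, (padded x σ i - padded x σ (i-1)) * v (SUp σ i)
      = (padded x σ i - padded x σ (i-1)) *
          v (Finset.univ.filter fun j => padded x σ i ≤ x j) := by
    intro i hi
    rw [Finset.mem_Ico] at hi
    obtain ⟨hi1, hi2⟩ := hi
    have hi1' : i - 1 < n := by omega
    by_cases hc : padded x σ i = padded x σ (i - 1)
    · rw [hc, sub_self, zero_mul, zero_mul]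
    · congr 2
      have hlt : padded x σ (i-1) < padded x σ i := by
        refine lt_of_le_of_ne ?_ (Ne.symm hc)
        rw [padded_lt x σ hi2, padded_lt x σ hi1']
        exact hσ (by simp only [Fin.mk_le_mk]; omega)
      ext j
      rw [mem_SUp, Finset.mem_filter]
      simp only [Finset.mem_univ, true_and]
      rw [padded_lt x σ hi2]
      constructor
      · intro h
        have h2 : x (σ ⟨i, hi2⟩) ≤ x (σ (σ.symm j)) := hσ (by simp only [Fin.le_def]; omega)
        simpa using h2
      · intro h
        by_contra hcon
        push_neg at hcon
        have h3 : x (σ (σ.symm j)) ≤ x (σ ⟨i - 1, hi1'⟩) :=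
          hσ (by simp only [Fin.le_def]; omega)
        rw [σ.apply_symm_apply] at h3
        have h4 := le_trans h h3
        rw [← padded_lt x σ hi1'] at h4
        rw [← padded_lt x σ hi2] at h4
        exact absurd (le_antisymm h4 (le_of_lt hlt)) hc
  rw [Finset.sum_congr rfl hmain, canonSum]

lemma padded_eq_of_monotone (x : Fin n → ℝ) (σ τ : Equiv.Perm (Fin n))
    (hσ : Monotone (x ∘ σ)) (hτ : Monotone (x ∘ τ)) : padded x σ = padded x τ := by
  have h1 : x ∘ σ = x ∘ τ :=
    (Tuple.comp_sort_eq_comp_iff_monotone.mpr hσ).trans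
      (Tuple.comp_sort_eq_comp_iff_monotone.mpr hτ).symm
  funext i
  unfold padded
  split
  · exact congrFun h1 _
  · rfl

/-- Independence of the Choquet sum from the choice of sorting permutation. -/
lemma sum_indep (hn : 0 < n) (v : Finset (Fin n) → ℝ) (hv : v ∅ = 0) (x : Fin n → ℝ)
    (σ τ : Equiv.Perm (Fin n)) (hσ : Monotone (x ∘ σ)) (hτ : Monotone (x ∘ τ)) :
    ∑ i : Fin n, x (σ i) * (v (SUp σ (i : ℕ)) - v (SUp σ ((i : ℕ) + 1)))
      = ∑ i : Fin n, x (τ i) * (v (SUp τ (i : ℕ)) - v (SUp τ ((i : ℕ) + 1))) := by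
  rw [sum_canon hn v hv x σ hσ, sum_canon hn v hv x τ hτ,
    padded_eq_of_monotone x σ τ hσ hτ]

/-- `Cv` computed along any sorting permutation. -/
lemma Cv_sorted (hn : 0 < n) (v : Finset (Fin n) → ℝ) (hv : v ∅ = 0) (x : Fin n → ℝ)
    (σ : Equiv.Perm (Fin n)) (hσ : Monotone (x ∘ σ)) :
    Cv v x = ∑ i : Fin n, x (σ i) * (v (SUp σ (i : ℕ)) - v (SUp σ ((i : ℕ) + 1))) := by
  rw [Cv]
  exact sum_indep hn v hv x (Tuple.sort x) σ (Tuple.monotone_sort x) hσ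

end Canon


section CvLemmas
open Finset

variable {n : ℕ}

lemma indTuple_eq_mul (S : Finset (Fin n)) (c : ℝ) (j : Fin n) :
    indTuple S c j = c * indTuple S 1 j := by
  unfold indTuple; split <;> simp

lemma Cv_indTuple (hn : 0 < n) (v : Finset (Fin n) → ℝ) (hv : v ∅ = 0)
    (S : Finset (Fin n)) {c : ℝ} (hc : 0 ≤ c) :
    Cv v (indTuple S c) = c * v S := by
  set σ := Tuple.sort (indTuple S 1) with hσdef
  have hχ : Monotone (indTuple S 1 ∘ σ) := Tuple.monotone_sort _
  have hσ : Monotone (indTuple S c ∘ σ) := by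
    intro i j hij
    show indTuple S c (σ i) ≤ indTuple S c (σ j)
    have e := indTuple_eq_mul S c
    rw [e (σ i), e (σ j)]
    exact mul_le_mul_of_nonneg_left (hχ hij) hc
  set m := n - S.card with hm
  -- upward closedness
  have hup : ∀ i j : Fin n, i ≤ j → σ i ∈ S → σ j ∈ S := by
    intro i j hij hi
    have := hχ hij
    simp only [Function.comp_apply, indTuple, if_pos hi] at this
    by_contra hj
    rw [if_neg hj] at this
    linarith
  have hcard : (Finset.univ.filter fun i => σ i ∈ S).card = S.card := by
    have himg : (Finset.univ.filter fun i => σ i ∈ S).image σ = S := by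
      ext j
      simp only [Finset.mem_image, Finset.mem_filter, Finset.mem_univ, true_and]
      constructor
      · rintro ⟨i, hi, rfl⟩; exact hi
      · intro hj; exact ⟨σ.symm j, by simpa using hj, σ.apply_symm_apply j⟩
    have h2 := Finset.card_image_of_injective
      (Finset.univ.filter fun i => σ i ∈ S) σ.injective
    rw [himg] at h2
    omega
  have hkey : ∀ i : Fin n, σ i ∈ S ↔ m ≤ (i : ℕ) := by
    intro i
    constructor
    · intro hi
      have hsub : Finset.univ.filter (fun j : Fin n => (i : ℕ) ≤ (j : ℕ))
          ⊆ Finset.univ.filter fun j => σ j ∈ S := by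
        intro j hj
        simp only [Finset.mem_filter, Finset.mem_univ, true_and] at *
        exact hup i j hj hi
      have hc1 := Finset.card_le_card hsub
      have hc2 : (Finset.univ.filter fun j : Fin n => (i : ℕ) ≤ (j : ℕ)).card = n - i := by
        rw [show (Finset.univ.filter fun j : Fin n => (i : ℕ) ≤ (j : ℕ)) = Finset.Ici i by
          ext j
          simp only [Finset.mem_filter, Finset.mem_univ, true_and, Finset.mem_Ici, Fin.le_def]]
        exact Fin.card_Ici i
      rw [hc2, hcard] at hc1
      have := i.isLt
      omega
    · intro hi
      by_contra hcon
      have hsub : (Finset.univ.filter fun j => σ j ∈ S)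
          ⊆ Finset.univ.filter fun j : Fin n => (i : ℕ) < (j : ℕ) := by
        intro j hj
        simp only [Finset.mem_filter, Finset.mem_univ, true_and] at *
        by_contra hji
        push_neg at hji
        exact hcon (hup j i (Fin.le_def.mpr hji) hj)
      have hc1 := Finset.card_le_card hsub
      have hc2 : (Finset.univ.filter fun j : Fin n => (i : ℕ) < (j : ℕ)).card = n - (i+1) := by
        rw [show (Finset.univ.filter fun j : Fin n => (i : ℕ) < (j : ℕ)) = Finset.Ioi i by
          ext j
          simp only [Finset.mem_filter, Finset.mem_univ, true_and, Finset.mem_Ioi, Fin.lt_def]]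
        rw [Fin.card_Ioi]
        omega
      rw [hc2, hcard] at hc1
      have hcardle : S.card ≤ n := by
        simpa using Finset.card_le_card (Finset.subset_univ S)
      have := i.isLt
      omega
  have hSm : SUp σ m = S := by
    ext j
    rw [mem_SUp]
    rw [← hkey (σ.symm j), σ.apply_symm_apply]
  have hmn : m ≤ n := by omega
  rw [Cv_sorted hn v hv _ σ hσ]
  have hterm : ∀ i : Fin n, indTuple S c (σ i) * (v (SUp σ (i:ℕ)) - v (SUp σ ((i:ℕ)+1)))
      = (fun t : ℕ => if m ≤ t then c * (v (SUp σ t) - v (SUp σ (t+1))) else 0) (i : ℕ) := by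
    intro i
    simp only [indTuple]
    by_cases hi : σ i ∈ S
    · rw [if_pos hi, if_pos ((hkey i).mp hi)]
    · rw [if_neg hi, if_neg (fun h => hi ((hkey i).mpr h)), zero_mul]
  rw [Finset.sum_congr rfl fun i _ => hterm i,
    Fin.sum_univ_eq_sum_range (fun t : ℕ => if m ≤ t then c * (v (SUp σ t) - v (SUp σ (t+1))) else 0) n,
    ← Finset.sum_filter]
  have hICO : (Finset.range n).filter (fun t => m ≤ t) = Finset.Ico m n := by
    ext t; simp [Finset.mem_Ico, Finset.mem_filter, Finset.mem_range]; omega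
  rw [hICO, ← Finset.mul_sum, telescope_sum (fun t => v (SUp σ t)) hmn,
    SUp_of_le σ le_rfl, hv, hSm, sub_zero]

/-- Comonotone modularity of `Cv`. -/
lemma Cv_modular (hn : 0 < n) (v : Finset (Fin n) → ℝ) (hv : v ∅ = 0) (u w : Fin n → ℝ)
    (σ : Equiv.Perm (Fin n)) (hu : Monotone (u ∘ σ)) (hw : Monotone (w ∘ σ)) :
    Cv v u + Cv v w = Cv v (fun i => min (u i) (w i)) + Cv v (fun i => max (u i) (w i)) := by
  have hmin : Monotone ((fun i => min (u i) (w i)) ∘ σ) := by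
    intro i j h; exact min_le_min (hu h) (hw h)
  have hmax : Monotone ((fun i => max (u i) (w i)) ∘ σ) := by
    intro i j h; exact max_le_max (hu h) (hw h)
  rw [Cv_sorted hn v hv u σ hu, Cv_sorted hn v hv w σ hw,
    Cv_sorted hn v hv _ σ hmin, Cv_sorted hn v hv _ σ hmax,
    ← Finset.sum_add_distrib, ← Finset.sum_add_distrib]
  refine Finset.sum_congr rfl fun i _ => ?_
  have : min (u (σ i)) (w (σ i)) + max (u (σ i)) (w (σ i)) = u (σ i) + w (σ i) :=
    min_add_max _ _
  linear_combination (v (SUp σ ((i : ℕ) + 1)) - v (SUp σ (i : ℕ))) * this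

end CvLemmas


section CheLemmas
open Finset

variable {n : ℕ}

/-- If `w ∘ σ` is monotone, the negative part is sorted by the reversed permutation. -/
lemma monotone_negpart_rev (w : Fin n → ℝ) (σ : Equiv.Perm (Fin n))
    (hw : Monotone (w ∘ σ)) :
    Monotone ((fun i => max (-w i) 0) ∘ (Fin.revPerm.trans σ)) := by
  intro i j hij
  have h1 : Fin.rev j ≤ Fin.rev i := Fin.rev_le_rev.mpr hij
  have h2 : w (σ (Fin.rev j)) ≤ w (σ (Fin.rev i)) := hw h1
  simp only [Function.comp_apply, Equiv.trans_apply, Fin.revPerm_apply]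
  exact max_le_max (neg_le_neg h2) le_rfl

/-- Comonotone modularity of the symmetric Choquet integral `Čv`. -/
lemma Che_modular (hn : 0 < n) (v : Finset (Fin n) → ℝ) (hv : v ∅ = 0) (a b : Fin n → ℝ)
    (σ : Equiv.Perm (Fin n)) (ha : Monotone (a ∘ σ)) (hb : Monotone (b ∘ σ)) :
    (Cv v (fun i => max (a i) 0) - Cv v (fun i => max (-a i) 0))
      + (Cv v (fun i => max (b i) 0) - Cv v (fun i => max (-b i) 0))
    = (Cv v (fun i => max (min (a i) (b i)) 0) - Cv v (fun i => max (-min (a i) (b i)) 0))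
      + (Cv v (fun i => max (max (a i) (b i)) 0) - Cv v (fun i => max (-max (a i) (b i)) 0)) := by
  have hap : Monotone ((fun i => max (a i) 0) ∘ σ) := fun i j h => max_le_max (ha h) le_rfl
  have hbp : Monotone ((fun i => max (b i) 0) ∘ σ) := fun i j h => max_le_max (hb h) le_rfl
  have ham := monotone_negpart_rev a σ ha
  have hbm := monotone_negpart_rev b σ hb
  have hpos := Cv_modular hn v hv _ _ σ hap hbp
  have hneg := Cv_modular hn v hv _ _ (Fin.revPerm.trans σ) ham hbm
  have e1 : (fun i => min (max (a i) 0) (max (b i) 0)) = fun i => max (min (a i) (b i)) 0 := by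
    funext i; exact (max_min_distrib_right (a i) (b i) 0).symm
  have hmmr : ∀ p q r : ℝ, max (max p r) (max q r) = max (max p q) r := by
    intro p q r; rw [max_max_max_comm, max_self]
  have e2 : (fun i => max (max (a i) 0) (max (b i) 0)) = fun i => max (max (a i) (b i)) 0 := by
    funext i; exact hmmr _ _ _
  have e3 : (fun i => min (max (-a i) 0) (max (-b i) 0)) = fun i => max (-max (a i) (b i)) 0 := by
    funext i
    rw [← max_min_distrib_right, min_neg_neg]
  have e4 : (fun i => max (max (-a i) 0) (max (-b i) 0)) = fun i => max (-min (a i) (b i)) 0 := by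
    funext i
    rw [hmmr, max_neg_neg]
  rw [e1, e2] at hpos
  rw [e3, e4] at hneg
  linarith

end CheLemmas

section RepLemmas
open Finset

variable {n : ℕ}

/-- Telescoping representation of a comonotonically modular function on nonnegative tuples. -/
lemma rep_nonneg (I : Set ℝ) (h0I : (0:ℝ) ∈ I) (f : (Fin n → ℝ) → ℝ)
    (hf0 : f (fun _ => 0) = 0) (hmod : ComonModularOn I f)
    (x : Fin n → ℝ) (hxI : ∀ i, x i ∈ I) (hx0 : ∀ i, 0 ≤ x i)
    (σ : Equiv.Perm (Fin n)) (hσ : Monotone (x ∘ σ)) :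
    f x = ∑ i : Fin n,
      (f (indTuple (SUp σ (i : ℕ)) (x (σ i))) - f (indTuple (SUp σ ((i : ℕ) + 1)) (x (σ i)))) := by
  classical
  set X : ℕ → (Fin n → ℝ) := fun k j => if j ∈ SUp σ k then x j else 0 with hX
  set T : ℕ → ℝ := fun k => f (indTuple (SUp σ k) (padded x σ k))
      - f (indTuple (SUp σ (k+1)) (padded x σ k)) with hT
  have hstep : ∀ k, k < n → f (X k) = T k + f (X (k+1)) := by
    intro k hk
    set a : Fin n → ℝ := indTuple (SUp σ k) (x (σ ⟨k, hk⟩)) with hadef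
    have haI : ∀ i, a i ∈ I := by
      intro i; rw [hadef]; unfold indTuple; split
      · exact hxI _
      · exact h0I
    have hbI : ∀ i, X (k+1) i ∈ I := by
      intro i; rw [hX]; simp only []; split
      · exact hxI _
      · exact h0I
    have hxk0 : 0 ≤ x (σ ⟨k, hk⟩) := hx0 _
    have hcom : Comonotone a (X (k+1)) := by
      refine ⟨σ, ?_, ?_⟩
      · intro i j hij
        simp only [Function.comp_apply, hadef, indTuple, mem_SUp, Equiv.symm_apply_apply]
        by_cases hi : k ≤ (i : ℕ)
        · rw [if_pos hi, if_pos (le_trans hi hij)]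
        · rw [if_neg hi]; split
          · exact hxk0
          · exact le_rfl
      · intro i j hij
        simp only [Function.comp_apply, hX, mem_SUp, Equiv.symm_apply_apply]
        by_cases hi : k + 1 ≤ (i : ℕ)
        · rw [if_pos hi, if_pos (le_trans hi hij)]
          exact hσ hij
        · rw [if_neg hi]; split
          · exact hx0 _
          · exact le_rfl
    have hmm := hmod a (X (k+1)) haI hbI hcom
    have hminmax :
        (fun i => min (a i) (X (k+1) i)) = indTuple (SUp σ (k+1)) (x (σ ⟨k, hk⟩))
        ∧ (fun i => max (a i) (X (k+1) i)) = X k := by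
      constructor <;> funext j <;>
        simp only [hadef, hX, indTuple] <;>
        rcases Nat.lt_or_ge ((σ.symm j : Fin n) : ℕ) k with hjk | hjk
      · have h1 : j ∉ SUp σ k := by rw [mem_SUp]; omega
        have h2 : j ∉ SUp σ (k+1) := by rw [mem_SUp]; omega
        rw [if_neg h1, if_neg h2, if_neg h2, min_self]
      · rcases Nat.lt_or_ge ((σ.symm j : Fin n) : ℕ) (k+1) with hjk1 | hjk1
        · have h1 : j ∈ SUp σ k := by rw [mem_SUp]; omega
          have h2 : j ∉ SUp σ (k+1) := by rw [mem_SUp]; omega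
          rw [if_pos h1, if_neg h2, if_neg h2]
          exact min_eq_right hxk0
        · have h1 : j ∈ SUp σ k := by rw [mem_SUp]; omega
          have h2 : j ∈ SUp σ (k+1) := by rw [mem_SUp]; omega
          have hle : x (σ ⟨k, hk⟩) ≤ x j := by
            have := hσ (show (⟨k, hk⟩ : Fin n) ≤ σ.symm j by
              rw [Fin.le_def]; exact le_of_lt hjk1 |>.trans le_rfl)
            simpa using this
          rw [if_pos h1, if_pos h2, if_pos h2]
          exact min_eq_left hle
      · have h1 : j ∉ SUp σ k := by rw [mem_SUp]; omega
        have h2 : j ∉ SUp σ (k+1) := by rw [mem_SUp]; omega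
        rw [if_neg h1, if_neg h2, if_neg h1, max_self]
      · rcases Nat.lt_or_ge ((σ.symm j : Fin n) : ℕ) (k+1) with hjk1 | hjk1
        · have h1 : j ∈ SUp σ k := by rw [mem_SUp]; omega
          have h2 : j ∉ SUp σ (k+1) := by rw [mem_SUp]; omega
          have hjeq : j = σ ⟨k, hk⟩ := by
            have : σ.symm j = ⟨k, hk⟩ := Fin.ext (by simp only [Fin.val_mk]; omega)
            rw [← this, σ.apply_symm_apply]
          rw [if_pos h1, if_neg h2, if_pos h1, hjeq, max_eq_left hxk0]
        · have h1 : j ∈ SUp σ k := by rw [mem_SUp]; omega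
          have h2 : j ∈ SUp σ (k+1) := by rw [mem_SUp]; omega
          have hle : x (σ ⟨k, hk⟩) ≤ x j := by
            have := hσ (show (⟨k, hk⟩ : Fin n) ≤ σ.symm j by
              rw [Fin.le_def]; exact le_of_lt hjk1 |>.trans le_rfl)
            simpa using this
          rw [if_pos h1, if_pos h2, if_pos h1]
          exact max_eq_right hle
    rw [hminmax.1, hminmax.2] at hmm
    have hTk : T k = f a - f (indTuple (SUp σ (k+1)) (x (σ ⟨k, hk⟩))) := by
      rw [hT]; simp only []
      rw [padded_lt x σ hk, hadef]
    rw [hTk]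
    linarith
  have hind : ∀ d k, k + d = n → f (X k) = ∑ i ∈ Finset.Ico k n, T i := by
    intro d
    induction d with
    | zero =>
      intro k hk
      have hkn : k = n := by omega
      subst hkn
      rw [Finset.Ico_self, Finset.sum_empty]
      have : X k = fun _ => 0 := by
        funext j
        rw [hX]; simp only []
        rw [if_neg]
        intro hmem
        rw [mem_SUp] at hmem
        have := (σ.symm j).isLt
        omega
      rw [this, hf0]
    | succ d ih =>
      intro k hk
      have hkn : k < n := by omega
      rw [hstep k hkn, ih (k+1) (by omega),
        ← Finset.sum_eq_sum_Ico_succ_bot hkn T]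
  have hX0 : X 0 = x := by
    funext j
    rw [hX]; simp only []
    rw [if_pos]
    rw [mem_SUp]
    omega
  have hfin := hind n 0 (by omega)
  rw [hX0] at hfin
  rw [hfin, show Finset.Ico 0 n = Finset.range n from (Finset.range_eq_Ico n).symm,
    ← Fin.sum_univ_eq_sum_range T n]
  refine Finset.sum_congr rfl fun i _ => ?_
  rw [hT]; simp only []
  rw [padded_lt x σ i.isLt, Fin.eta]

/-- Comonotone modularity is preserved under negation. -/
lemma comonModular_neg (I : Set ℝ) (hsymm : ∀ t : ℝ, t ∈ I → -t ∈ I)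
    (f : (Fin n → ℝ) → ℝ) (hmod : ComonModularOn I f) :
    ComonModularOn I (fun z => f (fun i => -(z i))) := by
  intro x y hx hy ⟨σ, hxσ, hyσ⟩
  have hnx : ∀ i, -x i ∈ I := fun i => hsymm _ (hx i)
  have hny : ∀ i, -y i ∈ I := fun i => hsymm _ (hy i)
  have hcom : Comonotone (fun i => -x i) (fun i => -y i) := by
    refine ⟨Fin.revPerm.trans σ, ?_, ?_⟩
    · intro i j hij
      simp only [Function.comp_apply, Equiv.trans_apply, Fin.revPerm_apply]
      exact neg_le_neg (hxσ (Fin.rev_le_rev.mpr hij))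
    · intro i j hij
      simp only [Function.comp_apply, Equiv.trans_apply, Fin.revPerm_apply]
      exact neg_le_neg (hyσ (Fin.rev_le_rev.mpr hij))
  have hmm := hmod _ _ hnx hny hcom
  have e1 : (fun i => min (-x i) (-y i)) = fun i => -(max (x i) (y i)) := by
    funext i; exact min_neg_neg _ _
  have e2 : (fun i => max (-x i) (-y i)) = fun i => -(min (x i) (y i)) := by
    funext i; exact max_neg_neg _ _
  rw [e1, e2] at hmm
  simp only []
  linarith

end RepLemmas

theorem statement16 (n : ℕ) (hn : 0 < n) (I : Set ℝ) (hI : I.OrdConnected)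
    (hsymm : ∀ x : ℝ, x ∈ I → -x ∈ I) (h11 : Set.Icc (-1 : ℝ) 1 ⊆ I)
    (f : (Fin n → ℝ) → ℝ) (hf0 : f (fun _ => 0) = 0)
    (hnc :
      (∃ x y : Fin n → ℝ, (∀ i, x i ∈ I ∩ Set.Ici 0) ∧ (∀ i, y i ∈ I ∩ Set.Ici 0) ∧
          f x ≠ f y) ∨
      (∃ x y : Fin n → ℝ, (∀ i, x i ∈ I ∩ Set.Iic 0) ∧ (∀ i, y i ∈ I ∩ Set.Iic 0) ∧
          f x ≠ f y)) :
    ((∃ v : Finset (Fin n) → ℝ, ∃ φ : ℝ → ℝ, v ∅ = 0 ∧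
        (∀ y ∈ I, ∀ z ∈ I, y ≤ z → φ y ≤ φ z) ∧ (∀ y ∈ I, φ (-y) = -φ y) ∧
        ∀ x : Fin n → ℝ, (∀ i, x i ∈ I) →
          f x = Cv v (fun i => max (φ (x i)) 0) - Cv v (fun i => max (-φ (x i)) 0)) ∧
      ∃ S : Finset (Fin n), f (indTuple S 1) ≠ 0)
    ↔
    (ComonModularOn I f ∧
      ∃ φ : ℝ → ℝ, (∀ y ∈ I, ∀ z ∈ I, y ≤ z → φ y ≤ φ z) ∧ (∀ y ∈ I, φ (-y) = -φ y) ∧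
        ∀ x ∈ I, ∀ S : Finset (Fin n), f (indTuple S x) = φ x * f (indTuple S 1)) := by
  classical
  have h0I : (0:ℝ) ∈ I := h11 ⟨by norm_num, by norm_num⟩
  have h1I : (1:ℝ) ∈ I := h11 ⟨by norm_num, by norm_num⟩
  constructor
  · -- forward direction
    rintro ⟨⟨v, φ, hv0, hφm, hφo, hrep⟩, S₀, hS₀⟩
    have hφ0 : φ 0 = 0 := by have := hφo 0 h0I; rw [neg_zero] at this; linarith
    have hscale : ∀ c ∈ I, ∀ S : Finset (Fin n), f (indTuple S c) = φ c * v S := by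
      intro c hc S
      have hxI : ∀ i, indTuple S c i ∈ I := by
        intro i; unfold indTuple; split
        · exact hc
        · exact h0I
      have h1 : (fun i => max (φ (indTuple S c i)) 0) = indTuple S (max (φ c) 0) := by
        funext i; unfold indTuple; split
        · rfl
        · rw [hφ0, max_self]
      have h2 : (fun i => max (-φ (indTuple S c i)) 0) = indTuple S (max (-φ c) 0) := by
        funext i; unfold indTuple; split
        · rfl
        · rw [hφ0, neg_zero, max_self]
      rw [hrep _ hxI, h1, h2, Cv_indTuple hn v hv0 S (le_max_right _ _),
          Cv_indTuple hn v hv0 S (le_max_right _ _)]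
      have hmx : max (φ c) 0 - max (-φ c) 0 = φ c := by
        rcases le_total (φ c) 0 with h | h
        · rw [max_eq_right h, max_eq_left (by linarith)]; ring
        · rw [max_eq_left h, max_eq_right (by linarith)]; ring
      linear_combination v S * hmx
    constructor
    · -- comonotone modularity
      rintro x y hx hy ⟨σ, hxσ, hyσ⟩
      have hminI : ∀ i, min (x i) (y i) ∈ I := by
        intro i; rcases le_total (x i) (y i) with h | h
        · rw [min_eq_left h]; exact hx i
        · rw [min_eq_right h]; exact hy i
      have hmaxI : ∀ i, max (x i) (y i) ∈ I := by
        intro i; rcases le_total (x i) (y i) with h | h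
        · rw [max_eq_right h]; exact hy i
        · rw [max_eq_left h]; exact hx i
      have hφmin : ∀ i, φ (min (x i) (y i)) = min (φ (x i)) (φ (y i)) := by
        intro i; rcases le_total (x i) (y i) with h | h
        · rw [min_eq_left h, min_eq_left (hφm _ (hx i) _ (hy i) h)]
        · rw [min_eq_right h, min_eq_right (hφm _ (hy i) _ (hx i) h)]
      have hφmax : ∀ i, φ (max (x i) (y i)) = max (φ (x i)) (φ (y i)) := by
        intro i; rcases le_total (x i) (y i) with h | h
        · rw [max_eq_right h, max_eq_right (hφm _ (hx i) _ (hy i) h)]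
        · rw [max_eq_left h, max_eq_left (hφm _ (hy i) _ (hx i) h)]
      have haσ : Monotone ((fun i => φ (x i)) ∘ σ) :=
        fun i j h => hφm _ (hx _) _ (hx _) (hxσ h)
      have hbσ : Monotone ((fun i => φ (y i)) ∘ σ) :=
        fun i j h => hφm _ (hy _) _ (hy _) (hyσ h)
      have key := Che_modular hn v hv0 (fun i => φ (x i)) (fun i => φ (y i)) σ haσ hbσ
      rw [hrep x hx, hrep y hy, hrep _ hminI, hrep _ hmaxI]
      simp only [hφmin, hφmax]
      exact key
    · -- the scaling function
      have hf1 : ∀ S : Finset (Fin n), f (indTuple S 1) = φ 1 * v S :=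
        fun S => hscale 1 h1I S
      have hφ1ne : φ 1 ≠ 0 := by
        intro h0
        exact hS₀ (by rw [hf1, h0, zero_mul])
      have hφ1pos : 0 < φ 1 := by
        have h01 : φ 0 ≤ φ 1 := hφm 0 h0I 1 h1I zero_le_one
        rw [hφ0] at h01
        exact lt_of_le_of_ne h01 (Ne.symm hφ1ne)
      refine ⟨fun t => φ t / φ 1, ?_, ?_, ?_⟩
      · intro y hy z hz hyz
        show φ y / φ 1 ≤ φ z / φ 1
        rw [div_eq_mul_inv, div_eq_mul_inv]
        exact mul_le_mul_of_nonneg_right (hφm y hy z hz hyz) (inv_nonneg.mpr hφ1pos.le)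
      · intro y hy
        show φ (-y) / φ 1 = -(φ y / φ 1)
        rw [hφo y hy, neg_div]
      · intro c hc S
        rw [hscale c hc S, hf1 S]
        field_simp
  · -- backward direction
    rintro ⟨hmod, φ, hφm, hφo, hsc⟩
    have hφ0 : φ 0 = 0 := by have := hφo 0 h0I; rw [neg_zero] at this; linarith
    have hv0 : (fun S : Finset (Fin n) => f (indTuple S 1)) ∅ = 0 := by
      have he : indTuple (∅ : Finset (Fin n)) (1:ℝ) = fun _ => 0 := by
        funext j; unfold indTuple; simp
      show f (indTuple (∅ : Finset (Fin n)) (1:ℝ)) = 0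
      rw [he, hf0]
    have hrep : ∀ x : Fin n → ℝ, (∀ i, x i ∈ I) →
        f x = Cv (fun S => f (indTuple S 1)) (fun i => max (φ (x i)) 0)
            - Cv (fun S => f (indTuple S 1)) (fun i => max (-φ (x i)) 0) := by
      intro x hx
      set v : Finset (Fin n) → ℝ := fun S => f (indTuple S 1) with hvdef
      have hxpI : ∀ i, max (x i) 0 ∈ I := by
        intro i; rcases le_total (x i) 0 with h | h
        · rw [max_eq_right h]; exact h0I
        · rw [max_eq_left h]; exact hx i
      have hxmI : ∀ i, max (-x i) 0 ∈ I := by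
        intro i; rcases le_total (x i) 0 with h | h
        · rw [max_eq_left (by linarith)]; exact hsymm _ (hx i)
        · rw [max_eq_right (by linarith)]; exact h0I
      -- split at 0
      have hsplit : f x = f (fun i => max (x i) 0) + f (fun i => -(max (-x i) 0)) := by
        have hcom : Comonotone x (fun _ => 0) :=
          ⟨Tuple.sort x, Tuple.monotone_sort x, monotone_const⟩
        have h := hmod x (fun _ => 0) hx (fun _ => h0I) hcom
        have e1 : (fun i => min (x i) ((fun _ => (0:ℝ)) i)) = fun i => -(max (-x i) 0) := by
          funext i
          rcases le_total (x i) 0 with h' | h'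
          · rw [min_eq_left h', max_eq_left (by linarith)]; ring
          · rw [min_eq_right h', max_eq_right (by linarith)]; ring
        have e2 : (fun i => max (x i) ((fun _ => (0:ℝ)) i)) = fun i => max (x i) 0 := rfl
        rw [hf0, e1, e2] at h
        linarith
      -- positive part
      have hposrep : f (fun i => max (x i) 0) = Cv v (fun i => max (φ (x i)) 0) := by
        set xp : Fin n → ℝ := fun i => max (x i) 0 with hxpdef
        set σ := Tuple.sort xp with hσdef
        have hσ : Monotone (xp ∘ σ) := Tuple.monotone_sort xp
        have h2 := rep_nonneg I h0I f hf0 hmod xp hxpI (fun i => le_max_right _ _) σ hσ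
        have hφxp : Monotone ((fun i => φ (xp i)) ∘ σ) :=
          fun i j h => hφm _ (hxpI _) _ (hxpI _) (hσ h)
        have hCv1 := Cv_sorted hn v hv0 (fun i => φ (xp i)) σ hφxp
        have ep : (fun i => max (φ (x i)) 0) = fun i => φ (xp i) := by
          funext i
          rcases le_total (x i) 0 with h' | h'
          · have : φ (x i) ≤ 0 := by
              have := hφm _ (hx i) 0 h0I h'
              rw [hφ0] at this; exact this
            rw [max_eq_right this]
            show (0:ℝ) = φ (max (x i) 0)
            rw [max_eq_right h', hφ0]
          · have : 0 ≤ φ (x i) := by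
              have := hφm 0 h0I _ (hx i) h'
              rw [hφ0] at this; exact this
            rw [max_eq_left this]
            show φ (x i) = φ (max (x i) 0)
            rw [max_eq_left h']
        rw [ep, hCv1, h2]
        refine Finset.sum_congr rfl fun i _ => ?_
        rw [hsc (xp (σ i)) (hxpI _) (SUp σ (i : ℕ)),
          hsc (xp (σ i)) (hxpI _) (SUp σ ((i : ℕ) + 1))]
        show φ (xp (σ i)) * v _ - φ (xp (σ i)) * v _ = _
        ring
      -- negative part
      have hnegrep : f (fun i => -(max (-x i) 0)) = -Cv v (fun i => max (-φ (x i)) 0) := by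
        set xm : Fin n → ℝ := fun i => max (-x i) 0 with hxmdef
        set g : (Fin n → ℝ) → ℝ := fun z => f (fun i => -(z i)) with hgdef
        have hgmod := comonModular_neg I hsymm f hmod
        have hg0 : g (fun _ => 0) = 0 := by
          show f (fun _ => -(0:ℝ)) = 0
          rw [show (fun _ : Fin n => -(0:ℝ)) = (fun _ => (0:ℝ)) by funext; rw [neg_zero]]
          exact hf0
        set τ := Tuple.sort xm with hτdef
        have hτ : Monotone (xm ∘ τ) := Tuple.monotone_sort xm
        have h3 := rep_nonneg I h0I g hg0 hgmod xm hxmI (fun i => le_max_right _ _) τ hτ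
        have hφxm : Monotone ((fun i => φ (xm i)) ∘ τ) :=
          fun i j h => hφm _ (hxmI _) _ (hxmI _) (hτ h)
        have hCv2 := Cv_sorted hn v hv0 (fun i => φ (xm i)) τ hφxm
        have em : (fun i => max (-φ (x i)) 0) = fun i => φ (xm i) := by
          funext i
          rcases le_total (x i) 0 with h' | h'
          · have h1 : φ (x i) ≤ 0 := by
              have := hφm _ (hx i) 0 h0I h'
              rw [hφ0] at this; exact this
            rw [max_eq_left (by linarith)]
            show -φ (x i) = φ (max (-x i) 0)
            rw [max_eq_left (by linarith), hφo _ (hx i)]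
          · have h1 : 0 ≤ φ (x i) := by
              have := hφm 0 h0I _ (hx i) h'
              rw [hφ0] at this; exact this
            rw [max_eq_right (by linarith)]
            show (0:ℝ) = φ (max (-x i) 0)
            rw [max_eq_right (by linarith), hφ0]
        have hgind : ∀ c ∈ I, ∀ S : Finset (Fin n), g (indTuple S c) = -(φ c * v S) := by
          intro c hc S
          show f (fun i => -(indTuple S c i)) = _
          have e : (fun i => -indTuple S c i) = indTuple S (-c) := by
            funext i; unfold indTuple; split
            · rfl
            · rw [neg_zero]
          rw [e, hsc (-c) (hsymm c hc) S, hφo c hc]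
          show -φ c * v S = _
          ring
        have hgx : g xm = f (fun i => -(max (-x i) 0)) := rfl
        rw [← hgx, h3, em, hCv2, ← Finset.sum_neg_distrib]
        refine Finset.sum_congr rfl fun i _ => ?_
        rw [hgind (xm (τ i)) (hxmI _) (SUp τ (i : ℕ)),
          hgind (xm (τ i)) (hxmI _) (SUp τ ((i : ℕ) + 1))]
        ring
      rw [hsplit, hposrep, hnegrep]
      ring
    refine ⟨⟨fun S => f (indTuple S 1), φ, hv0, hφm, hφo, hrep⟩, ?_⟩
    by_contra hall
    push_neg at hall
    have hCv0 : ∀ y : Fin n → ℝ, Cv (fun S : Finset (Fin n) => f (indTuple S 1)) y = 0 := by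
      intro y
      unfold Cv
      rw [Finset.sum_eq_zero]
      intro i _
      show y _ * (f (indTuple _ 1) - f (indTuple _ 1)) = 0
      rw [hall, hall, sub_self, mul_zero]
    have hfz : ∀ x : Fin n → ℝ, (∀ i, x i ∈ I) → f x = 0 := by
      intro x hx
      rw [hrep x hx, hCv0, hCv0, sub_self]
    rcases hnc with ⟨x, y, hx, hy, hne⟩ | ⟨x, y, hx, hy, hne⟩ <;>
      exact hne (by rw [hfz x fun i => (hx i).1, hfz y fun i => (hy i).1])
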